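/- Let G ∈ ℚ⟦X⟧ satisfy constantCoeff G = 1 and G² · (1 + X²) = 1. Then for every q ∈ ℕ, coeff q G ≠ 0 if and only if q is even. -/

import Mathlib

open PowerSeries

/-- If `G ∈ ℚ⟦X⟧` is the Taylor series of `1/√(1+u²)`
(`constantCoeff G = 1`, `G² (1 + X²) = 1`), then `coeff q G ≠ 0` iff `q` is even. -/
theorem inv_sqrt_coeff_ne_zero_iff_even (G : PowerSeries ℚ)
    (hG0 : constantCoeff G = 1) (hG : G ^ 2 * (1 + X ^ 2) = 1) :
    ∀ q : ℕ, coeff q G ≠ 0 ↔ Even q := by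
  have hG' : G ≠ 0 := by
    intro h; rw [h, map_zero] at hG0; norm_num at hG0
  have h2ne : (2 : ℚ⟦X⟧) ≠ 0 := by
    intro h
    have := congrArg (constantCoeff) h
    rw [map_ofNat, map_zero] at this
    norm_num at this
  have hGne : (2 : ℚ⟦X⟧) * G ≠ 0 := mul_ne_zero h2ne hG'
  have h0 : ((d⁄dX ℚ G) * (1 + X^2) + X * G) * (2 * G) = 0 := by
    have := congrArg (d⁄dX ℚ) hG
    simp [Derivation.leibniz, Derivation.leibniz_pow, smul_smul] at this
    ring_nf at this ⊢
    linear_combination this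
  have h1 : (d⁄dX ℚ G) * (1 + X^2) = -(X * G) := by
    rcases mul_eq_zero.mp h0 with h | h
    · linear_combination h
    · exact absurd h hGne
  have a1 : coeff 1 G = 0 := by
    have := congrArg (coeff 0) h1
    rw [mul_add, map_add, mul_one, coeff_derivative] at this
    simp [coeff_mul_X_pow'] at this
    exact this
  have hrec : ∀ m : ℕ, ((m:ℚ)+2) * coeff (m+2) G = -(((m:ℚ)+1) * coeff m G) := by
    intro m
    match m with
    | 0 =>
      have := congrArg (coeff 1) h1
      rw [mul_add, map_add, mul_one, coeff_derivative, map_neg, coeff_succ_X_mul,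
        coeff_zero_eq_constantCoeff, hG0] at this
      simp [coeff_mul_X_pow'] at this
      rw [coeff_zero_eq_constantCoeff, hG0]
      push_cast
      linarith [this]
    | Nat.succ k =>
      have := congrArg (coeff (k+2)) h1
      have h2 : coeff (k+2) ((d⁄dX ℚ G) * X^2) = coeff k (d⁄dX ℚ G) := by
        simpa using coeff_mul_X_pow (d⁄dX ℚ G) k 2
      rw [mul_add, map_add, mul_one, h2, coeff_derivative, coeff_derivative,
        map_neg, coeff_succ_X_mul] at this
      push_cast [Nat.succ_eq_add_one] at this ⊢
      rw [show k+1+2 = k+2+1 from by omega]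
      linear_combination this
  have key : ∀ k : ℕ, coeff (2*k) G ≠ 0 ∧ coeff (2*k+1) G = 0 := by
    intro k
    induction k with
    | zero => simpa [coeff_zero_eq_constantCoeff, hG0] using a1
    | succ n ih =>
      obtain ⟨he, ho⟩ := ih
      constructor
      · have h := hrec (2*n)
        rw [show 2*n+2 = 2*(n+1) from by ring] at h
        intro hz
        rw [hz, mul_zero] at h
        apply he
        have h' := neg_eq_zero.mp h.symm
        exact (mul_eq_zero.mp h').resolve_left (by positivity)
      · have h := hrec (2*n+1)
        rw [show 2*n+1+2 = 2*(n+1)+1 from by ring, ho, mul_zero, neg_zero] at h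
        exact (mul_eq_zero.mp h).resolve_left (by positivity)
  intro q
  constructor
  · intro hq
    by_contra hodd
    obtain ⟨k, hk⟩ := Nat.not_even_iff_odd.mp hodd
    exact hq (hk ▸ (key k).2)
  · rintro ⟨k, rfl⟩
    have := (key k).1
    rwa [show k + k = 2*k from by ring]
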